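/- Let b ≥ 2 be an integer, let N be a positive integer, let n be the integer with 2^{n−1} < N ≤ 2^n, and let M ≥ 0 be an integer. Then there exist non-negative integers m_1, …, m_n with m_ℓ·2^ℓ + 2^{ℓ−1} ≤ N for ℓ = 1, …, n, such that for every real x, every positive integer h and every integer a with 0 ≤ a < b^h, F(M, N, a·b^{−h}, (a+1)·b^{−h}, ({b^j x})_{j≥0}) ≤ N^{1/2} + Σ_{n/2 ≤ ℓ ≤ n} F(M + m_ℓ·2^ℓ, 2^{ℓ−1}, a·b^{−h}, (a+1)·b^{−h}, ({b^j x})_{j≥0}). -/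

import Mathlib

open scoped Classical

/-- `F M N α₁ α₂ x = |#{j : M ≤ j < M+N, α₁ ≤ x_j < α₂} − (α₂ − α₁)·N|`. -/
noncomputable def F (M N : ℕ) (α₁ α₂ : ℝ) (x : ℕ → ℝ) : ℝ :=
  |(((Finset.Ico M (M + N)).filter fun j => α₁ ≤ x j ∧ x j < α₂).card : ℝ) -
    (α₂ - α₁) * N|

/-- The sequence `({b^j x})_{j ≥ 0}` of fractional parts. -/
noncomputable def bseq (b : ℕ) (x : ℝ) : ℕ → ℝ := fun j => Int.fract ((b : ℝ) ^ j * x)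

lemma F_nonneg (M N : ℕ) (α₁ α₂ : ℝ) (x : ℕ → ℝ) : 0 ≤ F M N α₁ α₂ x := abs_nonneg _

lemma F_le_N (M N : ℕ) (α₁ α₂ : ℝ) (x : ℕ → ℝ) (h1 : 0 ≤ α₂ - α₁) (h2 : α₂ - α₁ ≤ 1) :
    F M N α₁ α₂ x ≤ N := by
  have hc : (((Finset.Ico M (M + N)).filter fun j => α₁ ≤ x j ∧ x j < α₂).card : ℝ) ≤ N := by
    have h1 := Finset.card_filter_le (Finset.Ico M (M+N)) (fun j => α₁ ≤ x j ∧ x j < α₂)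
    have h2 : (Finset.Ico M (M+N)).card = N := by simp
    rw [h2] at h1
    exact_mod_cast h1
  have hc0 : (0:ℝ) ≤ (((Finset.Ico M (M + N)).filter fun j => α₁ ≤ x j ∧ x j < α₂).card : ℝ) :=
    Nat.cast_nonneg _
  have hN0 : (0:ℝ) ≤ (N:ℝ) := Nat.cast_nonneg _
  have he0 : 0 ≤ (α₂ - α₁) * N := mul_nonneg h1 hN0
  have he1 : (α₂ - α₁) * N ≤ N := by nlinarith
  rw [F, abs_le]
  constructor <;> linarith

lemma F_add (M N₁ N₂ : ℕ) (α₁ α₂ : ℝ) (x : ℕ → ℝ) :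
    F M (N₁ + N₂) α₁ α₂ x ≤ F M N₁ α₁ α₂ x + F (M + N₁) N₂ α₁ α₂ x := by
  have hsplit : Finset.Ico M (M + (N₁ + N₂)) =
      Finset.Ico M (M + N₁) ∪ Finset.Ico (M + N₁) (M + N₁ + N₂) := by
    rw [Finset.Ico_union_Ico_eq_Ico (by omega) (by omega)]
    congr 1
    omega
  have hdisj : Disjoint ((Finset.Ico M (M + N₁)).filter fun j => α₁ ≤ x j ∧ x j < α₂)
      ((Finset.Ico (M + N₁) (M + N₁ + N₂)).filter fun j => α₁ ≤ x j ∧ x j < α₂) :=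
    (Finset.Ico_disjoint_Ico_consecutive _ _ _).mono
      (Finset.filter_subset _ _) (Finset.filter_subset _ _)
  unfold F
  rw [hsplit, Finset.filter_union, Finset.card_union_of_disjoint hdisj]
  set c1 := ((Finset.Ico M (M + N₁)).filter fun j => α₁ ≤ x j ∧ x j < α₂).card
  set c2 := ((Finset.Ico (M + N₁) (M + N₁ + N₂)).filter fun j => α₁ ≤ x j ∧ x j < α₂).card
  have : ((c1 + c2 : ℕ) : ℝ) - (α₂ - α₁) * (N₁ + N₂ : ℕ) =
      ((c1:ℝ) - (α₂ - α₁) * N₁) + ((c2:ℝ) - (α₂ - α₁) * N₂) := by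
    push_cast; ring
  rw [this]
  exact abs_add_le _ _

/-- remainder after greedily taking blocks of sizes `2^(n-1), 2^(n-2), …`. -/
def rem (n N : ℕ) : ℕ → ℕ
  | 0 => N
  | d+1 => if 2^(n-d-1) ≤ rem n N d then rem n N d - 2^(n-d-1) else rem n N d

lemma rem_le (n N d : ℕ) : rem n N d ≤ N := by
  induction d with
  | zero => simp [rem]
  | succ d ih =>
    rw [rem]
    have := Nat.sub_le (rem n N d) (2^(n-d-1))
    split <;> omega

lemma rem_bound (n N : ℕ) (hn2 : N ≤ 2^n) : ∀ d, d ≤ n → rem n N d ≤ 2^(n-d) := by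
  intro d
  induction d with
  | zero => simpa [rem]
  | succ d ih =>
    intro hd
    have hdn : d ≤ n := by omega
    have h1 := ih hdn
    have he : n - d = (n - (d+1)) + 1 := by omega
    have he2 : n - d - 1 = n - (d+1) := by omega
    rw [rem, he2]
    rw [he, pow_succ] at h1
    split <;> omega

lemma rem_dvd (n N : ℕ) : ∀ d, 2^(n-d) ∣ (N - rem n N d) := by
  intro d
  induction d with
  | zero => simp [rem]
  | succ d ih =>
    rw [rem, show n - d - 1 = n - (d+1) from by omega]
    have hle := rem_le n N d
    have hdvd : (2:ℕ)^(n-(d+1)) ∣ 2^(n-d) := pow_dvd_pow 2 (by omega)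
    have ih' : 2^(n-(d+1)) ∣ (N - rem n N d) := hdvd.trans ih
    split
    · rename_i hc
      have heq : N - (rem n N d - 2^(n-(d+1))) = (N - rem n N d) + 2^(n-(d+1)) := by omega
      rw [heq]
      exact Nat.dvd_add ih' dvd_rfl
    · exact ih'

lemma Icc_insert_bot (a n : ℕ) (h : a ≤ n) :
    Finset.Icc a n = insert a (Finset.Icc (a+1) n) := by
  ext ℓ
  simp only [Finset.mem_Icc, Finset.mem_insert]
  omega

theorem stmt7 (b : ℕ) (hb : 2 ≤ b) (N : ℕ) (hN : 1 ≤ N) (n : ℕ)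
    (hn1 : (2 : ℝ) ^ ((n : ℤ) - 1) < N) (hn2 : N ≤ 2 ^ n) (M : ℕ) :
    ∃ m : ℕ → ℕ,
      (∀ ℓ, 1 ≤ ℓ → ℓ ≤ n → m ℓ * 2 ^ ℓ + 2 ^ (ℓ - 1) ≤ N) ∧
      ∀ (x : ℝ) (h : ℕ), 1 ≤ h → ∀ a : ℕ, a < b ^ h →
        F M N ((a : ℝ) / (b : ℝ) ^ h) (((a : ℝ) + 1) / (b : ℝ) ^ h) (bseq b x) ≤
          Real.sqrt N +
            ∑ ℓ ∈ (Finset.Icc 1 n).filter (fun ℓ => n ≤ 2 * ℓ),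
              F (M + m ℓ * 2 ^ ℓ) (2 ^ (ℓ - 1))
                ((a : ℝ) / (b : ℝ) ^ h) (((a : ℝ) + 1) / (b : ℝ) ^ h) (bseq b x) := by
  -- basic facts about the α's
  have halpha : ∀ (hh : ℕ) (a : ℕ), 1 ≤ hh → a < b ^ hh →
      0 ≤ ((a:ℝ)+1)/(b:ℝ)^hh - (a:ℝ)/(b:ℝ)^hh ∧
      ((a:ℝ)+1)/(b:ℝ)^hh - (a:ℝ)/(b:ℝ)^hh ≤ 1 := by
    intro hh a _ _
    have hb1 : (1:ℝ) ≤ (b:ℝ)^hh := one_le_pow₀ (by exact_mod_cast (by omega : 1 ≤ b))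
    have hbp : (0:ℝ) < (b:ℝ)^hh := by linarith
    have hdiff : ((a:ℝ)+1)/(b:ℝ)^hh - (a:ℝ)/(b:ℝ)^hh = 1/(b:ℝ)^hh := by
      field_simp
      ring
    rw [hdiff]
    constructor
    · positivity
    · rw [div_le_one hbp]; linarith
  rcases Nat.eq_zero_or_pos n with hn0 | hnpos
  · -- n = 0, so N = 1
    subst hn0
    have hN1 : N = 1 := by
      have : N ≤ 1 := by simpa using hn2
      omega
    refine ⟨fun _ => 0, fun ℓ h1 h2 => by omega, ?_⟩
    intro x h hh a ha
    have hfilter : (Finset.Icc 1 0).filter (fun ℓ => 0 ≤ 2 * ℓ) = ∅ := by simp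
    rw [hfilter, Finset.sum_empty, add_zero, hN1]
    have := F_le_N M 1 ((a:ℝ)/(b:ℝ)^h) (((a:ℝ)+1)/(b:ℝ)^h) (bseq b x)
      (halpha h a hh ha).1 (halpha h a hh ha).2
    simpa using this
  -- main case n ≥ 1
  have h2n1 : 2^(n-1) < N := by
    have : ((2:ℝ))^((n:ℤ)-1) = ((2^(n-1) : ℕ) : ℝ) := by
      rw [show (n:ℤ) - 1 = ((n-1 : ℕ) : ℤ) by omega]
      push_cast
      rw [zpow_natCast]
    rw [this] at hn1
    exact_mod_cast hn1
  set ℓ₀ := (n+1)/2 with hℓ₀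
  have hℓ₀1 : 1 ≤ ℓ₀ := by omega
  have hℓ₀n : ℓ₀ ≤ n := by omega
  set D := n - ℓ₀ + 1 with hD
  have hDn : D ≤ n := by omega
  -- the block starting points
  set m : ℕ → ℕ := fun ℓ =>
    if 2^(ℓ-1) ≤ rem n N (n-ℓ) then (N - rem n N (n-ℓ)) / 2^ℓ else 0 with hm
  have hmmul : ∀ ℓ, 1 ≤ ℓ → ℓ ≤ n → 2^(ℓ-1) ≤ rem n N (n-ℓ) →
      m ℓ * 2^ℓ = N - rem n N (n-ℓ) := by
    intro ℓ h1 h2 hc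
    have hdvd : 2^ℓ ∣ (N - rem n N (n-ℓ)) := by
      have := rem_dvd n N (n-ℓ)
      rwa [show n - (n-ℓ) = ℓ by omega] at this
    rw [hm]
    simp only [if_pos hc]
    exact Nat.div_mul_cancel hdvd
  refine ⟨m, ?_, ?_⟩
  · intro ℓ h1 h2
    by_cases hc : 2^(ℓ-1) ≤ rem n N (n-ℓ)
    · rw [hmmul ℓ h1 h2 hc]
      have := rem_le n N (n-ℓ)
      omega
    · rw [hm]
      simp only [if_neg hc]
      have : 2^(ℓ-1) ≤ 2^(n-1) := Nat.pow_le_pow_right (by norm_num) (by omega)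
      omega
  intro x h hh a ha
  set α₁ := (a:ℝ)/(b:ℝ)^h
  set α₂ := ((a:ℝ)+1)/(b:ℝ)^h
  have hα := halpha h a hh ha
  -- key induction
  have key : ∀ d, d ≤ n →
      F M N α₁ α₂ (bseq b x) ≤
        (∑ ℓ ∈ Finset.Icc (n-d+1) n, F (M + m ℓ * 2^ℓ) (2^(ℓ-1)) α₁ α₂ (bseq b x)) +
        F (M + (N - rem n N d)) (rem n N d) α₁ α₂ (bseq b x) := by
    intro d
    induction d with
    | zero =>
      intro _
      simp [rem]
    | succ d ih =>
      intro hd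
      have hdn : d ≤ n := by omega
      have ih' := ih hdn
      set ℓ := n - d with hℓ
      have hℓ1 : 1 ≤ ℓ := by omega
      have hℓn : ℓ ≤ n := by omega
      have hnl : n - ℓ = d := by omega
      have hIcc : Finset.Icc (n-(d+1)+1) n = insert ℓ (Finset.Icc (ℓ+1) n) := by
        rw [show n-(d+1)+1 = ℓ by omega]
        exact Icc_insert_bot ℓ n hℓn
      have hnotmem : ℓ ∉ Finset.Icc (ℓ+1) n := by simp
      have hsum : ∑ ℓ' ∈ Finset.Icc (n-(d+1)+1) n, F (M + m ℓ' * 2^ℓ') (2^(ℓ'-1)) α₁ α₂ (bseq b x)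
          = F (M + m ℓ * 2^ℓ) (2^(ℓ-1)) α₁ α₂ (bseq b x) +
            ∑ ℓ' ∈ Finset.Icc (ℓ+1) n, F (M + m ℓ' * 2^ℓ') (2^(ℓ'-1)) α₁ α₂ (bseq b x) := by
        rw [hIcc, Finset.sum_insert hnotmem]
      rw [hsum]
      by_cases hc : 2^(ℓ-1) ≤ rem n N d
      · have hrem : rem n N (d+1) = rem n N d - 2^(ℓ-1) := by
          rw [rem, show n-d-1 = ℓ-1 by omega, if_pos hc]
        have hsplit : rem n N d = 2^(ℓ-1) + rem n N (d+1) := by omega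
        have hle := rem_le n N d
        have hFadd := F_add (M + (N - rem n N d)) (2^(ℓ-1)) (rem n N (d+1)) α₁ α₂ (bseq b x)
        rw [← hsplit] at hFadd
        have hp : 1 ≤ 2^(ℓ-1) := Nat.one_le_two_pow
        have hstart2 : M + (N - rem n N d) + 2^(ℓ-1) = M + (N - rem n N (d+1)) := by
          omega
        have hstart : M + (N - rem n N d) = M + m ℓ * 2^ℓ := by
          rw [hmmul ℓ hℓ1 hℓn (by rwa [hnl])]
          rw [hnl]
        rw [hstart2, hstart] at hFadd
        rw [hstart] at ih'
        linarith
      · have hrem : rem n N (d+1) = rem n N d := by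
          rw [rem, show n-d-1 = ℓ-1 by omega, if_neg hc]
        rw [hrem]
        have := F_nonneg (M + m ℓ * 2^ℓ) (2^(ℓ-1)) α₁ α₂ (bseq b x)
        linarith
  have hkey := key D hDn
  have hIccD : Finset.Icc (n-D+1) n = Finset.Icc ℓ₀ n := by
    congr 1
    omega
  have hfilter : (Finset.Icc 1 n).filter (fun ℓ => n ≤ 2 * ℓ) = Finset.Icc ℓ₀ n := by
    ext ℓ
    simp only [Finset.mem_filter, Finset.mem_Icc]
    omega
  -- bound the tail
  have hremD : rem n N D ≤ 2^(ℓ₀-1) := by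
    have := rem_bound n N hn2 D hDn
    rwa [show n - D = ℓ₀ - 1 by omega] at this
  have htail : F (M + (N - rem n N D)) (rem n N D) α₁ α₂ (bseq b x) ≤ Real.sqrt N := by
    have h1 := F_le_N (M + (N - rem n N D)) (rem n N D) α₁ α₂ (bseq b x) hα.1 hα.2
    have h2 : ((rem n N D : ℕ) : ℝ) ≤ ((2^(ℓ₀-1) : ℕ) : ℝ) := by exact_mod_cast hremD
    have h3 : ((2^(ℓ₀-1) : ℕ) : ℝ) ≤ Real.sqrt N := by
      rw [show ((2^(ℓ₀-1) : ℕ) : ℝ) = (2:ℝ)^(ℓ₀-1) by push_cast; ring]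
      rw [Real.le_sqrt (by positivity) (by positivity)]
      have hsq : ((2:ℝ)^(ℓ₀-1)) ^ 2 = (2:ℝ)^(2*(ℓ₀-1)) := by
        rw [← pow_mul, Nat.mul_comm]
      rw [hsq]
      have h4 : (2:ℝ)^(2*(ℓ₀-1)) ≤ (2:ℝ)^(n-1) := by
        apply pow_le_pow_right₀ (by norm_num)
        omega
      have h5 : (2:ℝ)^(n-1) ≤ (N:ℝ) := by
        have : ((2^(n-1) : ℕ) : ℝ) ≤ (N:ℝ) := by exact_mod_cast h2n1.le
        rwa [Nat.cast_pow, Nat.cast_ofNat] at this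
      linarith
    linarith
  rw [hIccD] at hkey
  rw [hfilter]
  calc F M N α₁ α₂ (bseq b x) ≤ _ := hkey
    _ ≤ (∑ ℓ ∈ Finset.Icc ℓ₀ n, F (M + m ℓ * 2^ℓ) (2^(ℓ-1)) α₁ α₂ (bseq b x)) + Real.sqrt N := by
        exact add_le_add_right htail _
    _ = _ := by ring
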